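/- (Corollary in Appendix C.) Fix N ≥ 1. Let Q be a probability distribution over variables (a1,a2,a3,b,x1,x2,x3,y,λ) where a1,a2,a3,b,x1,x2 are binary, x3,y take values in {0,1,…,N}, and λ takes values in {0,1,⊥}. Suppose Q satisfies: (i) Q(x1,x2,x3,y) > 0 for all input values; (ii) λ ⫫_Q (x1,x2,x3,y); (iii) a1 ⫫_Q x2 | (x1, λ=0) and a2 ⫫_Q x1 | (x2, λ=1); (iv) (λ,b) ⫫_Q (x1,x2,x3) | y, (λ,a1,a2,a3) ⫫_Q y | (x1,x2,x3), and (λ,a1,a2) ⫫_Q (x3,y) | (x1,x2). Define R_Q(a,b | x3,y) := Q(a1=a, b | x1=x2=1, x3, y) if x3 = 0 and R_Q(a,b | x3,y) := Q(a3=a, b | x1=x2=0, x3, y) if x3 ≠ 0, define BC_N[R_Q] := Σ_{i=0}^{N−1} [R_Q(a=b | x3=i, y=i) + R_Q(a=b | x3=i+1, y=i)] + R_Q(a=b | x3=N, y=N) − R_Q(a=b | x3=0, y=N), and α[Q] := Q(a1=1 | x1x2=10) + Q(a2=1 | x1x2=01) + Q(a1=a2=0 | x1x2=11). If BC_N[R_Q]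 − 2N·α[Q] = (N+1)·(cos(π/(N+1)) + 1) − 1, then the fraction of runs with a definite causal order satisfies Q(λ ∈ {0,1}) ≤ (N+1)·(1 − cos(π/(N+1))). -/

import Mathlib

set_option synthInstance.maxSize 100000
set_option maxHeartbeats 1000000

/-- A configuration of the single-switch Braunstein–Caves scenario with a three-valued
hidden variable: binary `a1, a2, a3, b, x1, x2`, inputs `x3, y ∈ {0, 1, …, N}`, and
`λ ∈ {0, 1, ⊥}` (modelled as `Option Bool`, with `none` playing the role of `⊥`). -/
structure CfgO (N : ℕ) where
  a1 : Bool
  a2 : Bool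
  a3 : Bool
  b : Bool
  x1 : Bool
  x2 : Bool
  x3 : Fin (N + 1)
  y : Fin (N + 1)
  lam : Option Bool
deriving DecidableEq, Fintype

/-- The probability of the event `E` under the distribution `Q`. -/
def pr {N : ℕ} (Q : CfgO N → ℝ) (E : CfgO N → Prop) [DecidablePred E] : ℝ :=
  ∑ c : CfgO N, if E c then Q c else 0

/-- The conditional probability `Q(E | F) = Q(E ∧ F) / Q(F)`. -/
noncomputable def cpr {N : ℕ} (Q : CfgO N → ℝ) (E F : CfgO N → Prop)
    [DecidablePred E] [DecidablePred F] : ℝ :=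
  pr Q (fun c => E c ∧ F c) / pr Q F

/-- `R_Q(a = b | x3, y)`: the probability of `a = b` under the conditional distribution
`R_Q(a, b | x3, y)`, which is `Q(a1=a, b | x1=x2=1, x3, y)` for `x3 = 0` and
`Q(a3=a, b | x1=x2=0, x3, y)` for `x3 ≠ 0`. -/
noncomputable def Rab {N : ℕ} (Q : CfgO N → ℝ) (x3 y : Fin (N + 1)) : ℝ :=
  if x3 = 0 then
    cpr Q (fun c => c.a1 = c.b)
      (fun c => c.x1 = true ∧ c.x2 = true ∧ c.x3 = x3 ∧ c.y = y)
  else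
    cpr Q (fun c => c.a3 = c.b)
      (fun c => c.x1 = false ∧ c.x2 = false ∧ c.x3 = x3 ∧ c.y = y)

open Fin.NatCast in
/-- The Braunstein–Caves expression `BC_N[R_Q]`. -/
noncomputable def BC {N : ℕ} (Q : CfgO N → ℝ) : ℝ :=
  (∑ i ∈ Finset.range N, (Rab Q (i : Fin (N + 1)) (i : Fin (N + 1))
      + Rab Q ((i + 1 : ℕ) : Fin (N + 1)) (i : Fin (N + 1))))
    + Rab Q (N : Fin (N + 1)) (N : Fin (N + 1))
    - Rab Q 0 (N : Fin (N + 1))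

/-- The quantity `α[Q]`. -/
noncomputable def alphaQ {N : ℕ} (Q : CfgO N → ℝ) : ℝ :=
  cpr Q (fun c => c.a1 = true) (fun c => c.x1 = true ∧ c.x2 = false)
    + cpr Q (fun c => c.a2 = true) (fun c => c.x1 = false ∧ c.x2 = true)
    + cpr Q (fun c => c.a1 = false ∧ c.a2 = false) (fun c => c.x1 = true ∧ c.x2 = true)

open Fin.NatCast

section Helpers

variable {N : ℕ} (Q : CfgO N → ℝ)

lemma pr_ext {E F : CfgO N → Prop} [DecidablePred E] [DecidablePred F]
    (h : ∀ c, E c ↔ F c) : pr Q E = pr Q F := by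
  unfold pr
  refine Finset.sum_congr rfl fun c _ => ?_
  by_cases hE : E c
  · rw [if_pos hE, if_pos ((h c).1 hE)]
  · rw [if_neg hE, if_neg (fun hF => hE ((h c).2 hF))]

lemma pr_false : pr Q (fun _ => False) = 0 := by simp [pr]

lemma pr_nonneg (hnn : ∀ c, 0 ≤ Q c) (E : CfgO N → Prop) [DecidablePred E] :
    0 ≤ pr Q E := by
  refine Finset.sum_nonneg fun c _ => ?_
  split
  · exact hnn c
  · exact le_rfl

lemma pr_mono (hnn : ∀ c, 0 ≤ Q c) {E F : CfgO N → Prop}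
    [DecidablePred E] [DecidablePred F] (h : ∀ c, E c → F c) :
    pr Q E ≤ pr Q F := by
  refine Finset.sum_le_sum fun c _ => ?_
  by_cases hE : E c
  · rw [if_pos hE, if_pos (h c hE)]
  · rw [if_neg hE]
    split
    · exact hnn c
    · exact le_rfl

lemma pr_le_add (hnn : ∀ c, 0 ≤ Q c) {G E F : CfgO N → Prop}
    [DecidablePred G] [DecidablePred E] [DecidablePred F]
    (h : ∀ c, G c → E c ∨ F c) :
    pr Q G ≤ pr Q E + pr Q F := by
  unfold pr
  rw [← Finset.sum_add_distrib]
  refine Finset.sum_le_sum fun c _ => ?_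
  by_cases hG : G c
  · rcases h c hG with h' | h' <;> by_cases hE : E c <;> by_cases hF : F c <;>
      simp_all <;> linarith [hnn c]
  · by_cases hE : E c <;> by_cases hF : F c <;> simp_all <;> linarith [hnn c]

lemma pr_add {E F : CfgO N → Prop} [DecidablePred E] [DecidablePred F] :
    pr Q (fun c => E c ∧ F c) + pr Q (fun c => ¬ E c ∧ F c) = pr Q F := by
  unfold pr
  rw [← Finset.sum_add_distrib]
  refine Finset.sum_congr rfl fun c _ => ?_
  by_cases hE : E c <;> by_cases hF : F c <;> simp [hE, hF]

lemma pr_split {V : Type*} [Fintype V] [DecidableEq V] (f : CfgO N → V)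
    (E : CfgO N → Prop) [DecidablePred E] :
    pr Q E = ∑ v : V, pr Q (fun c => E c ∧ f c = v) := by
  unfold pr
  rw [Finset.sum_comm]
  refine Finset.sum_congr rfl fun c _ => ?_
  by_cases hE : E c
  · simp [hE]
  · simp [hE]

lemma cpr_nonneg (hnn : ∀ c, 0 ≤ Q c) (E F : CfgO N → Prop)
    [DecidablePred E] [DecidablePred F] : 0 ≤ cpr Q E F :=
  div_nonneg (pr_nonneg Q hnn _) (pr_nonneg Q hnn _)

lemma cpr_le_one (hnn : ∀ c, 0 ≤ Q c) (E F : CfgO N → Prop)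
    [DecidablePred E] [DecidablePred F] : cpr Q E F ≤ 1 :=
  div_le_one_of_le₀ (pr_mono Q hnn fun c h => h.2) (pr_nonneg Q hnn _)

lemma cpr_ext {E E' F F' : CfgO N → Prop} [DecidablePred E] [DecidablePred E']
    [DecidablePred F] [DecidablePred F'] (hE : ∀ c, E c ↔ E' c)
    (hF : ∀ c, F c ↔ F' c) : cpr Q E F = cpr Q E' F' := by
  unfold cpr
  rw [pr_ext Q (fun c => and_congr (hE c) (hF c)), pr_ext Q hF]

lemma cpr_le_add (hnn : ∀ c, 0 ≤ Q c) {G E E' F : CfgO N → Prop}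
    [DecidablePred G] [DecidablePred E] [DecidablePred E'] [DecidablePred F]
    (h : ∀ c, G c → E c ∨ E' c) :
    cpr Q G F ≤ cpr Q E F + cpr Q E' F := by
  unfold cpr
  rw [← add_div]
  have hnum : pr Q (fun c => G c ∧ F c)
      ≤ pr Q (fun c => E c ∧ F c) + pr Q (fun c => E' c ∧ F c) :=
    pr_le_add Q hnn fun c hc => by
      rcases h c hc.1 with h' | h'
      · exact Or.inl ⟨h', hc.2⟩
      · exact Or.inr ⟨h', hc.2⟩
  have hd : 0 ≤ (pr Q F)⁻¹ := inv_nonneg.mpr (pr_nonneg Q hnn _)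
  rw [div_eq_mul_inv, div_eq_mul_inv]
  exact mul_le_mul_of_nonneg_right hnum hd

lemma cpr_compl {F : CfgO N → Prop} [DecidablePred F] (hF : 0 < pr Q F)
    (E : CfgO N → Prop) [DecidablePred E] :
    cpr Q E F + cpr Q (fun c => ¬ E c) F = 1 := by
  unfold cpr
  rw [← add_div, pr_add, div_self hF.ne']

end Helpers
section Chain

/-- Abstract chained-Bell bookkeeping over the reals. -/
lemma chain_bound (N : ℕ) (hN : 1 ≤ N) (R : ℕ → ℕ → ℝ) (bb g : ℕ → ℝ)
    (D : ℕ → ℕ → ℝ) (e : ℝ)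
    (h1 : ∀ t, t ≤ N → R 0 t ≤ (1 - bb t) + e)
    (h2 : ∀ t, t ≤ N → (1 - bb t) - e ≤ R 0 t)
    (h3 : ∀ s t, 1 ≤ s → s ≤ N → t ≤ N → R s t = 1 - D s t)
    (h4 : ∀ s t, 1 ≤ s → s ≤ N → t ≤ N → bb t ≤ g s + D s t)
    (h5 : ∀ s t, 1 ≤ s → s ≤ N → t ≤ N → g s ≤ bb t + D s t) :
    (∑ i ∈ Finset.range N, (R i i + R (i + 1) i)) + R N N - R 0 N
      ≤ 2 * N + 2 * e := by
  have main : ∀ k, 1 ≤ k → k ≤ N →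
      (∑ i ∈ Finset.range k, (R i i + R (i + 1) i)) ≤ e + 2 * k - g k := by
    intro k hk
    induction k, hk using Nat.le_induction with
    | base =>
      intro h1N
      rw [Finset.sum_range_one]
      have e1 := h1 0 (Nat.zero_le N)
      have e2 := h3 1 0 le_rfl h1N (Nat.zero_le N)
      have e3 := h5 1 0 le_rfl h1N (Nat.zero_le N)
      push_cast
      linarith
    | succ k hk ih =>
      intro hk1N
      have hkN : k ≤ N := Nat.le_of_succ_le hk1N
      have ihk := ih hkN
      rw [Finset.sum_range_succ]
      have e1 := h3 k k hk hkN hkN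
      have e2 := h3 (k + 1) k (by omega) hk1N hkN
      have e3 := h5 (k + 1) k (by omega) hk1N hkN
      have e4 := h4 k k hk hkN hkN
      push_cast
      push_cast at ihk
      linarith
  have hniq := main N hN le_rfl
  have e1 := h3 N N hN le_rfl le_rfl
  have e2 := h2 N le_rfl
  have e3 := h4 N N hN le_rfl le_rfl
  linarith

end Chain
section Marg

variable {N : ℕ} (Q : CfgO N → ℝ)

/-- freeness of inputs transfers to any event on the inputs -/
lemma free_marg
    (hfree : ∀ (lv : Option Bool) (x1v x2v : Bool) (x3v yv : Fin (N + 1)),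
      pr Q (fun c => c.lam = lv ∧ c.x1 = x1v ∧ c.x2 = x2v ∧ c.x3 = x3v ∧ c.y = yv)
        = pr Q (fun c => c.lam = lv)
          * pr Q (fun c => c.x1 = x1v ∧ c.x2 = x2v ∧ c.x3 = x3v ∧ c.y = yv))
    (E : Bool → Bool → Fin (N + 1) → Fin (N + 1) → Prop)
    [∀ a b s t, Decidable (E a b s t)] (l : Option Bool) :
    pr Q (fun c => E c.x1 c.x2 c.x3 c.y ∧ c.lam = l)
      = pr Q (fun c => c.lam = l) * pr Q (fun c => E c.x1 c.x2 c.x3 c.y) := by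
  have key : ∀ p : Bool × Bool × Fin (N + 1) × Fin (N + 1),
      pr Q (fun c => (E c.x1 c.x2 c.x3 c.y ∧ c.lam = l)
          ∧ (c.x1, c.x2, c.x3, c.y) = p)
        = pr Q (fun c => c.lam = l)
          * pr Q (fun c => E c.x1 c.x2 c.x3 c.y ∧ (c.x1, c.x2, c.x3, c.y) = p) := by
    rintro ⟨u, v, s, t⟩
    by_cases hE : E u v s t
    · have e1 : pr Q (fun c => (E c.x1 c.x2 c.x3 c.y ∧ c.lam = l)
          ∧ (c.x1, c.x2, c.x3, c.y) = (u, v, s, t))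
          = pr Q (fun c => c.lam = l ∧ c.x1 = u ∧ c.x2 = v ∧ c.x3 = s ∧ c.y = t) := by
        refine pr_ext Q fun c => ?_
        simp only [Prod.mk.injEq]
        constructor
        · rintro ⟨⟨_, hl⟩, h1, h2, h3, h4⟩
          exact ⟨hl, h1, h2, h3, h4⟩
        · rintro ⟨hl, h1, h2, h3, h4⟩
          exact ⟨⟨by rw [h1, h2, h3, h4]; exact hE, hl⟩, h1, h2, h3, h4⟩
      have e2 : pr Q (fun c => E c.x1 c.x2 c.x3 c.y ∧ (c.x1, c.x2, c.x3, c.y) = (u, v, s, t))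
          = pr Q (fun c => c.x1 = u ∧ c.x2 = v ∧ c.x3 = s ∧ c.y = t) := by
        refine pr_ext Q fun c => ?_
        simp only [Prod.mk.injEq]
        constructor
        · rintro ⟨_, h1, h2, h3, h4⟩
          exact ⟨h1, h2, h3, h4⟩
        · rintro ⟨h1, h2, h3, h4⟩
          exact ⟨by rw [h1, h2, h3, h4]; exact hE, h1, h2, h3, h4⟩
      rw [e1, e2, hfree]
    · have e1 : pr Q (fun c => (E c.x1 c.x2 c.x3 c.y ∧ c.lam = l)
          ∧ (c.x1, c.x2, c.x3, c.y) = (u, v, s, t)) = 0 := by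
        rw [pr_ext Q (F := fun _ => False), pr_false]
        intro c
        simp only [Prod.mk.injEq, iff_false]
        rintro ⟨⟨hEc, _⟩, h1, h2, h3, h4⟩
        rw [h1, h2, h3, h4] at hEc
        exact hE hEc
      have e2 : pr Q (fun c => E c.x1 c.x2 c.x3 c.y
          ∧ (c.x1, c.x2, c.x3, c.y) = (u, v, s, t)) = 0 := by
        rw [pr_ext Q (F := fun _ => False), pr_false]
        intro c
        simp only [Prod.mk.injEq, iff_false]
        rintro ⟨hEc, h1, h2, h3, h4⟩
        rw [h1, h2, h3, h4] at hEc
        exact hE hEc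
      rw [e1, e2, mul_zero]
  rw [pr_split Q (fun c => (c.x1, c.x2, c.x3, c.y))
      (fun c => E c.x1 c.x2 c.x3 c.y ∧ c.lam = l),
    pr_split Q (fun c => (c.x1, c.x2, c.x3, c.y))
      (fun c => E c.x1 c.x2 c.x3 c.y), Finset.mul_sum]
  exact Finset.sum_congr rfl fun p _ => key p

/-- Decomposition of a conditional probability according to the value of `λ`. -/
lemma cpr_decomp (hnn : ∀ c, 0 ≤ Q c) {E F : CfgO N → Prop}
    [DecidablePred E] [DecidablePred F] (hF : 0 < pr Q F)
    (hmarg : ∀ l : Option Bool,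
      pr Q (fun c => F c ∧ c.lam = l) = pr Q (fun c => c.lam = l) * pr Q F) :
    cpr Q E F = ∑ l : Option Bool,
      pr Q (fun c => c.lam = l) * cpr Q E (fun c => F c ∧ c.lam = l) := by
  unfold cpr
  rw [pr_split Q (fun c => c.lam) (fun c => E c ∧ F c), Finset.sum_div]
  refine Finset.sum_congr rfl fun l _ => ?_
  have hre : pr Q (fun c => (E c ∧ F c) ∧ c.lam = l)
      = pr Q (fun c => E c ∧ F c ∧ c.lam = l) := pr_ext Q fun c => by tauto
  rw [hre]
  rcases eq_or_lt_of_le (pr_nonneg Q hnn (fun c => c.lam = l)) with hq | hq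
  · have hz : pr Q (fun c => E c ∧ F c ∧ c.lam = l) = 0 := by
      refine le_antisymm ?_ (pr_nonneg Q hnn _)
      rw [hq]
      exact pr_mono Q hnn fun c hc => hc.2.2
    rw [hz, ← hq, zero_div, zero_mul]
  · rw [hmarg l]
    have hFl : 0 < pr Q (fun c => c.lam = l) * pr Q F := mul_pos hq hF
    field_simp
end Marg
/-- The conditional-on-`λ = l` version of `Rab`. -/
noncomputable def Rl {N : ℕ} (Q : CfgO N → ℝ) (l : Option Bool)
    (x3 y : Fin (N + 1)) : ℝ :=
  if x3 = 0 then
    cpr Q (fun c => c.a1 = c.b)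
      (fun c => (c.x1 = true ∧ c.x2 = true ∧ c.x3 = x3 ∧ c.y = y) ∧ c.lam = l)
  else
    cpr Q (fun c => c.a3 = c.b)
      (fun c => (c.x1 = false ∧ c.x2 = false ∧ c.x3 = x3 ∧ c.y = y) ∧ c.lam = l)

/-- The conditional-on-`λ = l` version of `BC`. -/
noncomputable def BCl {N : ℕ} (Q : CfgO N → ℝ) (l : Option Bool) : ℝ :=
  (∑ i ∈ Finset.range N, (Rl Q l (i : Fin (N + 1)) (i : Fin (N + 1))
      + Rl Q l ((i + 1 : ℕ) : Fin (N + 1)) (i : Fin (N + 1))))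
    + Rl Q l (N : Fin (N + 1)) (N : Fin (N + 1))
    - Rl Q l 0 (N : Fin (N + 1))

/-- The conditional-on-`λ = l` version of `alphaQ`. -/
noncomputable def alphal {N : ℕ} (Q : CfgO N → ℝ) (l : Option Bool) : ℝ :=
  cpr Q (fun c => c.a1 = true) (fun c => (c.x1 = true ∧ c.x2 = false) ∧ c.lam = l)
    + cpr Q (fun c => c.a2 = true) (fun c => (c.x1 = false ∧ c.x2 = true) ∧ c.lam = l)
    + cpr Q (fun c => c.a1 = false ∧ c.a2 = false)
        (fun c => (c.x1 = true ∧ c.x2 = true) ∧ c.lam = l)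

section Decomp

variable {N : ℕ} (Q : CfgO N → ℝ)

lemma Rab_decomp (hnn : ∀ c, 0 ≤ Q c)
    (hin : ∀ (x1v x2v : Bool) (x3v yv : Fin (N + 1)),
      0 < pr Q (fun c => c.x1 = x1v ∧ c.x2 = x2v ∧ c.x3 = x3v ∧ c.y = yv))
    (hfree : ∀ (lv : Option Bool) (x1v x2v : Bool) (x3v yv : Fin (N + 1)),
      pr Q (fun c => c.lam = lv ∧ c.x1 = x1v ∧ c.x2 = x2v ∧ c.x3 = x3v ∧ c.y = yv)
        = pr Q (fun c => c.lam = lv)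
          * pr Q (fun c => c.x1 = x1v ∧ c.x2 = x2v ∧ c.x3 = x3v ∧ c.y = yv))
    (s t : Fin (N + 1)) :
    Rab Q s t = ∑ l : Option Bool, pr Q (fun c => c.lam = l) * Rl Q l s t := by
  unfold Rab Rl
  by_cases hs : s = 0
  · simp only [if_pos hs]
    exact cpr_decomp Q hnn (hin true true s t)
      (fun l => free_marg Q hfree (fun a b u v => a = true ∧ b = true ∧ u = s ∧ v = t) l)
  · simp only [if_neg hs]
    exact cpr_decomp Q hnn (hin false false s t)
      (fun l => free_marg Q hfree (fun a b u v => a = false ∧ b = false ∧ u = s ∧ v = t) l)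

end Decomp
section Decomp2

variable {N : ℕ} (Q : CfgO N → ℝ)

lemma BC_decomp (hnn : ∀ c, 0 ≤ Q c)
    (hin : ∀ (x1v x2v : Bool) (x3v yv : Fin (N + 1)),
      0 < pr Q (fun c => c.x1 = x1v ∧ c.x2 = x2v ∧ c.x3 = x3v ∧ c.y = yv))
    (hfree : ∀ (lv : Option Bool) (x1v x2v : Bool) (x3v yv : Fin (N + 1)),
      pr Q (fun c => c.lam = lv ∧ c.x1 = x1v ∧ c.x2 = x2v ∧ c.x3 = x3v ∧ c.y = yv)
        = pr Q (fun c => c.lam = lv)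
          * pr Q (fun c => c.x1 = x1v ∧ c.x2 = x2v ∧ c.x3 = x3v ∧ c.y = yv)) :
    BC Q = ∑ l : Option Bool, pr Q (fun c => c.lam = l) * BCl Q l := by
  set q : Option Bool → ℝ := fun l => pr Q (fun c => c.lam = l) with hq
  unfold BC BCl
  simp only [Rab_decomp Q hnn hin hfree, ← hq]
  have c1 : (∑ i ∈ Finset.range N, ∑ l : Option Bool,
        q l * Rl Q l (i : Fin (N + 1)) (i : Fin (N + 1)))
      = ∑ l : Option Bool, ∑ i ∈ Finset.range N,
        q l * Rl Q l (i : Fin (N + 1)) (i : Fin (N + 1)) := Finset.sum_comm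
  have c2 : (∑ i ∈ Finset.range N, ∑ l : Option Bool,
        q l * Rl Q l ((i + 1 : ℕ) : Fin (N + 1)) (i : Fin (N + 1)))
      = ∑ l : Option Bool, ∑ i ∈ Finset.range N,
        q l * Rl Q l ((i + 1 : ℕ) : Fin (N + 1)) (i : Fin (N + 1)) := Finset.sum_comm
  rw [Finset.sum_add_distrib, c1, c2, ← Finset.sum_add_distrib,
    ← Finset.sum_add_distrib, ← Finset.sum_sub_distrib]
  refine Finset.sum_congr rfl fun l _ => ?_
  simp only [hq, ← Finset.sum_add_distrib]
  rw [mul_sub, mul_add, Finset.mul_sum]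
  simp only [mul_add]

lemma alpha_decomp (hnn : ∀ c, 0 ≤ Q c)
    (hin : ∀ (x1v x2v : Bool) (x3v yv : Fin (N + 1)),
      0 < pr Q (fun c => c.x1 = x1v ∧ c.x2 = x2v ∧ c.x3 = x3v ∧ c.y = yv))
    (hfree : ∀ (lv : Option Bool) (x1v x2v : Bool) (x3v yv : Fin (N + 1)),
      pr Q (fun c => c.lam = lv ∧ c.x1 = x1v ∧ c.x2 = x2v ∧ c.x3 = x3v ∧ c.y = yv)
        = pr Q (fun c => c.lam = lv)
          * pr Q (fun c => c.x1 = x1v ∧ c.x2 = x2v ∧ c.x3 = x3v ∧ c.y = yv)) :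
    alphaQ Q = ∑ l : Option Bool, pr Q (fun c => c.lam = l) * alphal Q l := by
  have hp2 : ∀ u v : Bool, 0 < pr Q (fun c => c.x1 = u ∧ c.x2 = v) := fun u v =>
    lt_of_lt_of_le (hin u v 0 0) (pr_mono Q hnn fun c hc => ⟨hc.1, hc.2.1⟩)
  unfold alphaQ alphal
  rw [cpr_decomp Q hnn (hp2 true false)
      (fun l => free_marg Q hfree (fun a b _ _ => a = true ∧ b = false) l),
    cpr_decomp Q hnn (hp2 false true)
      (fun l => free_marg Q hfree (fun a b _ _ => a = false ∧ b = true) l),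
    cpr_decomp Q hnn (hp2 true true)
      (fun l => free_marg Q hfree (fun a b _ _ => a = true ∧ b = true) l),
    ← Finset.sum_add_distrib, ← Finset.sum_add_distrib]
  exact Finset.sum_congr rfl fun l _ => by ring

end Decomp2
section Key

variable {N : ℕ} (Q : CfgO N → ℝ)

lemma cpr_transfer {E F1 F2 B1 B2 : CfgO N → Prop} [DecidablePred E]
    [DecidablePred F1] [DecidablePred F2] [DecidablePred B1] [DecidablePred B2]
    {q : ℝ} (hq : 0 < q)
    (h1 : pr Q F1 = q * pr Q B1) (h2 : pr Q F2 = q * pr Q B2)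
    (hB1 : 0 < pr Q B1) (hB2 : 0 < pr Q B2)
    (key : pr Q (fun c => E c ∧ F1 c) * pr Q B2
      = pr Q (fun c => E c ∧ F2 c) * pr Q B1) :
    cpr Q E F1 = cpr Q E F2 := by
  unfold cpr
  rw [h1, h2, div_eq_div_iff (by positivity) (by positivity)]
  linear_combination q * key

lemma Rl_nonneg (hnn : ∀ c, 0 ≤ Q c) (l : Option Bool) (s t : Fin (N + 1)) :
    0 ≤ Rl Q l s t := by
  unfold Rl
  split
  · exact cpr_nonneg Q hnn _ _
  · exact cpr_nonneg Q hnn _ _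

lemma Rl_le_one (hnn : ∀ c, 0 ≤ Q c) (l : Option Bool) (s t : Fin (N + 1)) :
    Rl Q l s t ≤ 1 := by
  unfold Rl
  split
  · exact cpr_le_one Q hnn _ _
  · exact cpr_le_one Q hnn _ _

lemma alphal_nonneg (hnn : ∀ c, 0 ≤ Q c) (l : Option Bool) :
    0 ≤ alphal Q l := by
  unfold alphal
  have h1 := cpr_nonneg Q hnn (fun c => c.a1 = true)
    (fun c => (c.x1 = true ∧ c.x2 = false) ∧ c.lam = l)
  have h2 := cpr_nonneg Q hnn (fun c => c.a2 = true)
    (fun c => (c.x1 = false ∧ c.x2 = true) ∧ c.lam = l)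
  have h3 := cpr_nonneg Q hnn (fun c => c.a1 = false ∧ c.a2 = false)
    (fun c => (c.x1 = true ∧ c.x2 = true) ∧ c.lam = l)
  linarith

lemma BCl_le (hN : 1 ≤ N) (hnn : ∀ c, 0 ≤ Q c) (l : Option Bool) :
    BCl Q l ≤ 2 * N + 1 := by
  unfold BCl
  have hsum : (∑ i ∈ Finset.range N,
      (Rl Q l (i : Fin (N + 1)) (i : Fin (N + 1))
        + Rl Q l ((i + 1 : ℕ) : Fin (N + 1)) (i : Fin (N + 1))))
      ≤ ∑ _i ∈ Finset.range N, (2 : ℝ) := by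
    refine Finset.sum_le_sum fun i _ => ?_
    have := Rl_le_one Q hnn l (i : Fin (N + 1)) (i : Fin (N + 1))
    have := Rl_le_one Q hnn l ((i + 1 : ℕ) : Fin (N + 1)) (i : Fin (N + 1))
    linarith
  rw [Finset.sum_const, Finset.card_range] at hsum
  have h1 := Rl_le_one Q hnn l (N : Fin (N + 1)) (N : Fin (N + 1))
  have h2 := Rl_nonneg Q hnn l 0 (N : Fin (N + 1))
  have : (N : ℝ) * 2 = 2 * N := by ring
  rw [nsmul_eq_mul] at hsum
  linarith

end Key
section Alpha0

variable {N : ℕ} (Q : CfgO N → ℝ)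

lemma sum_option3 (f : Option Bool → ℝ) :
    (∑ l : Option Bool, f l) = f none + (f (some true) + f (some false)) := by
  rw [Fintype.sum_option, Fintype.sum_bool]

lemma halpha_sf (hnn : ∀ c, 0 ≤ Q c)
    (hin : ∀ (x1v x2v : Bool) (x3v yv : Fin (N + 1)),
      0 < pr Q (fun c => c.x1 = x1v ∧ c.x2 = x2v ∧ c.x3 = x3v ∧ c.y = yv))
    (hfree : ∀ (lv : Option Bool) (x1v x2v : Bool) (x3v yv : Fin (N + 1)),
      pr Q (fun c => c.lam = lv ∧ c.x1 = x1v ∧ c.x2 = x2v ∧ c.x3 = x3v ∧ c.y = yv)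
        = pr Q (fun c => c.lam = lv)
          * pr Q (fun c => c.x1 = x1v ∧ c.x2 = x2v ∧ c.x3 = x3v ∧ c.y = yv))
    (hA0 : ∀ a1v x2v x1v : Bool,
      pr Q (fun c => c.a1 = a1v ∧ c.x2 = x2v ∧ c.x1 = x1v ∧ c.lam = some false)
          * pr Q (fun c => c.x1 = x1v ∧ c.lam = some false)
        = pr Q (fun c => c.a1 = a1v ∧ c.x1 = x1v ∧ c.lam = some false)
          * pr Q (fun c => c.x2 = x2v ∧ c.x1 = x1v ∧ c.lam = some false))
    (hq : 0 < pr Q (fun c => c.lam = some false)) :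
    cpr Q (fun c => c.a1 = !false)
      (fun c => (c.x1 = true ∧ c.x2 = true) ∧ c.lam = some false)
      ≤ alphal Q (some false) := by
  set q : ℝ := pr Q (fun c => c.lam = some false) with hqdef
  -- positivity of denominators
  have hB : 0 < pr Q (fun c => c.x1 = true ∧ c.lam = some false) := by
    have hm : pr Q (fun c => (c.x1 = true) ∧ c.lam = some false)
        = q * pr Q (fun c => c.x1 = true) :=
      free_marg Q hfree (fun a _ _ _ => a = true) (some false)
    rw [hm]
    exact mul_pos hq (lt_of_lt_of_le (hin true true 0 0)
      (pr_mono Q hnn fun c hc => hc.1))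
  have hD : ∀ v : Bool, 0 < pr Q (fun c => c.x2 = v ∧ c.x1 = true ∧ c.lam = some false) := by
    intro v
    have hm : pr Q (fun c => (c.x2 = v ∧ c.x1 = true) ∧ c.lam = some false)
        = q * pr Q (fun c => c.x2 = v ∧ c.x1 = true) :=
      free_marg Q hfree (fun a b _ _ => b = v ∧ a = true) (some false)
    have he : pr Q (fun c => c.x2 = v ∧ c.x1 = true ∧ c.lam = some false)
        = pr Q (fun c => (c.x2 = v ∧ c.x1 = true) ∧ c.lam = some false) :=
      pr_ext Q fun c => by tauto
    rw [he, hm]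
    exact mul_pos hq (lt_of_lt_of_le (hin true v 0 0)
      (pr_mono Q hnn fun c hc => ⟨hc.2.1, hc.1⟩))
  have hAt := hA0 true true true
  have hAf := hA0 true false true
  have key : pr Q (fun c => c.a1 = true ∧ c.x2 = true ∧ c.x1 = true ∧ c.lam = some false)
        * pr Q (fun c => c.x2 = false ∧ c.x1 = true ∧ c.lam = some false)
      = pr Q (fun c => c.a1 = true ∧ c.x2 = false ∧ c.x1 = true ∧ c.lam = some false)
        * pr Q (fun c => c.x2 = true ∧ c.x1 = true ∧ c.lam = some false) := by
    apply mul_right_cancel₀ hB.ne'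
    linear_combination pr Q (fun c => c.x2 = false ∧ c.x1 = true ∧ c.lam = some false) * hAt
      - pr Q (fun c => c.x2 = true ∧ c.x1 = true ∧ c.lam = some false) * hAf
  have c1 : cpr Q (fun c => c.a1 = true)
        (fun c => (c.x1 = true ∧ c.x2 = true) ∧ c.lam = some false)
      = pr Q (fun c => c.a1 = true ∧ c.x2 = true ∧ c.x1 = true ∧ c.lam = some false)
        / pr Q (fun c => c.x2 = true ∧ c.x1 = true ∧ c.lam = some false) := by
    unfold cpr
    rw [pr_ext Q (F := fun c => c.a1 = true ∧ c.x2 = true ∧ c.x1 = true ∧ c.lam = some false)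
        (fun c => by tauto),
      pr_ext Q (E := fun c => (c.x1 = true ∧ c.x2 = true) ∧ c.lam = some false)
        (F := fun c => c.x2 = true ∧ c.x1 = true ∧ c.lam = some false) (fun c => by tauto)]
  have c2 : cpr Q (fun c => c.a1 = true)
        (fun c => (c.x1 = true ∧ c.x2 = false) ∧ c.lam = some false)
      = pr Q (fun c => c.a1 = true ∧ c.x2 = false ∧ c.x1 = true ∧ c.lam = some false)
        / pr Q (fun c => c.x2 = false ∧ c.x1 = true ∧ c.lam = some false) := by
    unfold cpr
    rw [pr_ext Q (F := fun c => c.a1 = true ∧ c.x2 = false ∧ c.x1 = true ∧ c.lam = some false)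
        (fun c => by tauto),
      pr_ext Q (E := fun c => (c.x1 = true ∧ c.x2 = false) ∧ c.lam = some false)
        (F := fun c => c.x2 = false ∧ c.x1 = true ∧ c.lam = some false) (fun c => by tauto)]
  have heq : cpr Q (fun c => c.a1 = true)
        (fun c => (c.x1 = true ∧ c.x2 = true) ∧ c.lam = some false)
      = cpr Q (fun c => c.a1 = true)
        (fun c => (c.x1 = true ∧ c.x2 = false) ∧ c.lam = some false) := by
    rw [c1, c2, div_eq_div_iff (hD true).ne' (hD false).ne']
    exact key
  have h2 := cpr_nonneg Q hnn (fun c => c.a2 = true)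
    (fun c => (c.x1 = false ∧ c.x2 = true) ∧ c.lam = some false)
  have h3 := cpr_nonneg Q hnn (fun c => c.a1 = false ∧ c.a2 = false)
    (fun c => (c.x1 = true ∧ c.x2 = true) ∧ c.lam = some false)
  unfold alphal
  simp only [Bool.not_false]
  rw [heq]
  linarith

lemma halpha_st (hnn : ∀ c, 0 ≤ Q c)
    (hin : ∀ (x1v x2v : Bool) (x3v yv : Fin (N + 1)),
      0 < pr Q (fun c => c.x1 = x1v ∧ c.x2 = x2v ∧ c.x3 = x3v ∧ c.y = yv))
    (hfree : ∀ (lv : Option Bool) (x1v x2v : Bool) (x3v yv : Fin (N + 1)),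
      pr Q (fun c => c.lam = lv ∧ c.x1 = x1v ∧ c.x2 = x2v ∧ c.x3 = x3v ∧ c.y = yv)
        = pr Q (fun c => c.lam = lv)
          * pr Q (fun c => c.x1 = x1v ∧ c.x2 = x2v ∧ c.x3 = x3v ∧ c.y = yv))
    (hA1 : ∀ a2v x1v x2v : Bool,
      pr Q (fun c => c.a2 = a2v ∧ c.x1 = x1v ∧ c.x2 = x2v ∧ c.lam = some true)
          * pr Q (fun c => c.x2 = x2v ∧ c.lam = some true)
        = pr Q (fun c => c.a2 = a2v ∧ c.x2 = x2v ∧ c.lam = some true)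
          * pr Q (fun c => c.x1 = x1v ∧ c.x2 = x2v ∧ c.lam = some true))
    (hq : 0 < pr Q (fun c => c.lam = some true)) :
    cpr Q (fun c => c.a1 = !true)
      (fun c => (c.x1 = true ∧ c.x2 = true) ∧ c.lam = some true)
      ≤ alphal Q (some true) := by
  set q : ℝ := pr Q (fun c => c.lam = some true) with hqdef
  have hB : 0 < pr Q (fun c => c.x2 = true ∧ c.lam = some true) := by
    have hm : pr Q (fun c => (c.x2 = true) ∧ c.lam = some true)
        = q * pr Q (fun c => c.x2 = true) :=
      free_marg Q hfree (fun _ b _ _ => b = true) (some true)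
    rw [hm]
    exact mul_pos hq (lt_of_lt_of_le (hin true true 0 0)
      (pr_mono Q hnn fun c hc => hc.2.1))
  have hD : ∀ v : Bool, 0 < pr Q (fun c => c.x1 = v ∧ c.x2 = true ∧ c.lam = some true) := by
    intro v
    have hm : pr Q (fun c => (c.x1 = v ∧ c.x2 = true) ∧ c.lam = some true)
        = q * pr Q (fun c => c.x1 = v ∧ c.x2 = true) :=
      free_marg Q hfree (fun a b _ _ => a = v ∧ b = true) (some true)
    have he : pr Q (fun c => c.x1 = v ∧ c.x2 = true ∧ c.lam = some true)
        = pr Q (fun c => (c.x1 = v ∧ c.x2 = true) ∧ c.lam = some true) :=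
      pr_ext Q fun c => by tauto
    rw [he, hm]
    exact mul_pos hq (lt_of_lt_of_le (hin v true 0 0)
      (pr_mono Q hnn fun c hc => ⟨hc.1, hc.2.1⟩))
  have hAt := hA1 true true true
  have hAf := hA1 true false true
  have key : pr Q (fun c => c.a2 = true ∧ c.x1 = true ∧ c.x2 = true ∧ c.lam = some true)
        * pr Q (fun c => c.x1 = false ∧ c.x2 = true ∧ c.lam = some true)
      = pr Q (fun c => c.a2 = true ∧ c.x1 = false ∧ c.x2 = true ∧ c.lam = some true)
        * pr Q (fun c => c.x1 = true ∧ c.x2 = true ∧ c.lam = some true) := by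
    apply mul_right_cancel₀ hB.ne'
    linear_combination pr Q (fun c => c.x1 = false ∧ c.x2 = true ∧ c.lam = some true) * hAt
      - pr Q (fun c => c.x1 = true ∧ c.x2 = true ∧ c.lam = some true) * hAf
  have c1 : cpr Q (fun c => c.a2 = true)
        (fun c => (c.x1 = true ∧ c.x2 = true) ∧ c.lam = some true)
      = pr Q (fun c => c.a2 = true ∧ c.x1 = true ∧ c.x2 = true ∧ c.lam = some true)
        / pr Q (fun c => c.x1 = true ∧ c.x2 = true ∧ c.lam = some true) := by
    unfold cpr
    rw [pr_ext Q (F := fun c => c.a2 = true ∧ c.x1 = true ∧ c.x2 = true ∧ c.lam = some true)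
        (fun c => by tauto),
      pr_ext Q (E := fun c => (c.x1 = true ∧ c.x2 = true) ∧ c.lam = some true)
        (F := fun c => c.x1 = true ∧ c.x2 = true ∧ c.lam = some true) (fun c => by tauto)]
  have c2 : cpr Q (fun c => c.a2 = true)
        (fun c => (c.x1 = false ∧ c.x2 = true) ∧ c.lam = some true)
      = pr Q (fun c => c.a2 = true ∧ c.x1 = false ∧ c.x2 = true ∧ c.lam = some true)
        / pr Q (fun c => c.x1 = false ∧ c.x2 = true ∧ c.lam = some true) := by
    unfold cpr
    rw [pr_ext Q (F := fun c => c.a2 = true ∧ c.x1 = false ∧ c.x2 = true ∧ c.lam = some true)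
        (fun c => by tauto),
      pr_ext Q (E := fun c => (c.x1 = false ∧ c.x2 = true) ∧ c.lam = some true)
        (F := fun c => c.x1 = false ∧ c.x2 = true ∧ c.lam = some true) (fun c => by tauto)]
  have heq : cpr Q (fun c => c.a2 = true)
        (fun c => (c.x1 = true ∧ c.x2 = true) ∧ c.lam = some true)
      = cpr Q (fun c => c.a2 = true)
        (fun c => (c.x1 = false ∧ c.x2 = true) ∧ c.lam = some true) := by
    rw [c1, c2, div_eq_div_iff (hD true).ne' (hD false).ne']
    exact key
  have hstep : cpr Q (fun c => c.a1 = false)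
        (fun c => (c.x1 = true ∧ c.x2 = true) ∧ c.lam = some true)
      ≤ cpr Q (fun c => c.a1 = false ∧ c.a2 = false)
          (fun c => (c.x1 = true ∧ c.x2 = true) ∧ c.lam = some true)
        + cpr Q (fun c => c.a2 = true)
          (fun c => (c.x1 = true ∧ c.x2 = true) ∧ c.lam = some true) := by
    refine cpr_le_add Q hnn fun c hc => ?_
    by_cases ha2 : c.a2 = true
    · exact Or.inr ha2
    · exact Or.inl ⟨hc, by revert ha2; cases c.a2 <;> simp⟩

  have h1 := cpr_nonneg Q hnn (fun c => c.a1 = true)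
    (fun c => (c.x1 = true ∧ c.x2 = false) ∧ c.lam = some true)
  unfold alphal
  simp only [Bool.not_true]
  rw [heq] at hstep
  linarith

end Alpha0
section Main

variable {N : ℕ} (Q : CfgO N → ℝ)

lemma def_bound (hN : 1 ≤ N) (hnn : ∀ c, 0 ≤ Q c)
    (hin : ∀ (x1v x2v : Bool) (x3v yv : Fin (N + 1)),
      0 < pr Q (fun c => c.x1 = x1v ∧ c.x2 = x2v ∧ c.x3 = x3v ∧ c.y = yv))
    (hfree : ∀ (lv : Option Bool) (x1v x2v : Bool) (x3v yv : Fin (N + 1)),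
      pr Q (fun c => c.lam = lv ∧ c.x1 = x1v ∧ c.x2 = x2v ∧ c.x3 = x3v ∧ c.y = yv)
        = pr Q (fun c => c.lam = lv)
          * pr Q (fun c => c.x1 = x1v ∧ c.x2 = x2v ∧ c.x3 = x3v ∧ c.y = yv))
    (hRC1 : ∀ (lv : Option Bool) (bv x1v x2v : Bool) (x3v yv : Fin (N + 1)),
      pr Q (fun c => c.lam = lv ∧ c.b = bv ∧
            c.x1 = x1v ∧ c.x2 = x2v ∧ c.x3 = x3v ∧ c.y = yv)
          * pr Q (fun c => c.y = yv)
        = pr Q (fun c => c.lam = lv ∧ c.b = bv ∧ c.y = yv)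
          * pr Q (fun c => c.x1 = x1v ∧ c.x2 = x2v ∧ c.x3 = x3v ∧ c.y = yv))
    (hRC2 : ∀ (lv : Option Bool) (a1v a2v a3v x1v x2v : Bool) (x3v yv : Fin (N + 1)),
      pr Q (fun c => c.lam = lv ∧ c.a1 = a1v ∧ c.a2 = a2v ∧ c.a3 = a3v ∧
            c.x1 = x1v ∧ c.x2 = x2v ∧ c.x3 = x3v ∧ c.y = yv)
          * pr Q (fun c => c.x1 = x1v ∧ c.x2 = x2v ∧ c.x3 = x3v)
        = pr Q (fun c => c.lam = lv ∧ c.a1 = a1v ∧ c.a2 = a2v ∧ c.a3 = a3v ∧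
            c.x1 = x1v ∧ c.x2 = x2v ∧ c.x3 = x3v)
          * pr Q (fun c => c.x1 = x1v ∧ c.x2 = x2v ∧ c.x3 = x3v ∧ c.y = yv))
    (hRC3 : ∀ (lv : Option Bool) (a1v a2v x1v x2v : Bool) (x3v yv : Fin (N + 1)),
      pr Q (fun c => c.lam = lv ∧ c.a1 = a1v ∧ c.a2 = a2v ∧
            c.x1 = x1v ∧ c.x2 = x2v ∧ c.x3 = x3v ∧ c.y = yv)
          * pr Q (fun c => c.x1 = x1v ∧ c.x2 = x2v)
        = pr Q (fun c => c.lam = lv ∧ c.a1 = a1v ∧ c.a2 = a2v ∧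
            c.x1 = x1v ∧ c.x2 = x2v)
          * pr Q (fun c => c.x1 = x1v ∧ c.x2 = x2v ∧ c.x3 = x3v ∧ c.y = yv))
    (l : Option Bool) (vstar : Bool)
    (halpha : 0 < pr Q (fun c => c.lam = l) →
      cpr Q (fun c => c.a1 = !vstar)
        (fun c => (c.x1 = true ∧ c.x2 = true) ∧ c.lam = l) ≤ alphal Q l) :
    pr Q (fun c => c.lam = l) * BCl Q l
      ≤ pr Q (fun c => c.lam = l) * (2 * N + 2 * N * alphal Q l) := by
  rcases eq_or_lt_of_le (pr_nonneg Q hnn (fun c => c.lam = l)) with hq | hq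
  · rw [← hq, zero_mul, zero_mul]
  -- positive-probability case
  set q : ℝ := pr Q (fun c => c.lam = l) with hqdef
  -- input marginals conditional on λ = l
  have m00 : ∀ s t : Fin (N + 1),
      pr Q (fun c => (c.x1 = false ∧ c.x2 = false ∧ c.x3 = s ∧ c.y = t) ∧ c.lam = l)
        = q * pr Q (fun c => c.x1 = false ∧ c.x2 = false ∧ c.x3 = s ∧ c.y = t) :=
    fun s t => free_marg Q hfree (fun a b u v => a = false ∧ b = false ∧ u = s ∧ v = t) l
  have m11 : ∀ t : Fin (N + 1),
      pr Q (fun c => (c.x1 = true ∧ c.x2 = true ∧ c.x3 = 0 ∧ c.y = t) ∧ c.lam = l)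
        = q * pr Q (fun c => c.x1 = true ∧ c.x2 = true ∧ c.x3 = 0 ∧ c.y = t) :=
    fun t => free_marg Q hfree (fun a b u v => a = true ∧ b = true ∧ u = 0 ∧ v = t) l
  have mY : ∀ t : Fin (N + 1),
      pr Q (fun c => (c.y = t) ∧ c.lam = l) = q * pr Q (fun c => c.y = t) :=
    fun t => free_marg Q hfree (fun _ _ _ v => v = t) l
  have mX3 : ∀ s : Fin (N + 1),
      pr Q (fun c => (c.x1 = false ∧ c.x2 = false ∧ c.x3 = s) ∧ c.lam = l)
        = q * pr Q (fun c => c.x1 = false ∧ c.x2 = false ∧ c.x3 = s) :=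
    fun s => free_marg Q hfree (fun a b u _ => a = false ∧ b = false ∧ u = s) l
  have mP11 : pr Q (fun c => (c.x1 = true ∧ c.x2 = true) ∧ c.lam = l)
      = q * pr Q (fun c => c.x1 = true ∧ c.x2 = true) :=
    free_marg Q hfree (fun a b _ _ => a = true ∧ b = true) l
  -- positivity of base events
  have pY : ∀ t : Fin (N + 1), 0 < pr Q (fun c => c.y = t) := fun t =>
    lt_of_lt_of_le (hin false false 0 t) (pr_mono Q hnn fun c hc => hc.2.2.2)
  have pX3 : ∀ s : Fin (N + 1),
      0 < pr Q (fun c => c.x1 = false ∧ c.x2 = false ∧ c.x3 = s) := fun s =>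
    lt_of_lt_of_le (hin false false s 0)
      (pr_mono Q hnn fun c hc => ⟨hc.1, hc.2.1, hc.2.2.1⟩)
  have pP11 : 0 < pr Q (fun c => c.x1 = true ∧ c.x2 = true) :=
    lt_of_lt_of_le (hin true true 0 0) (pr_mono Q hnn fun c hc => ⟨hc.1, hc.2.1⟩)
  -- conditional marginal stability of b
  have tb : ∀ (v u1 u2 : Bool) (s t : Fin (N + 1)),
      cpr Q (fun c => c.b = v)
          (fun c => (c.x1 = u1 ∧ c.x2 = u2 ∧ c.x3 = s ∧ c.y = t) ∧ c.lam = l)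
        = cpr Q (fun c => c.b = v) (fun c => (c.y = t) ∧ c.lam = l) := by
    intro v u1 u2 s t
    refine cpr_transfer Q hq
      (free_marg Q hfree (fun a b u w => a = u1 ∧ b = u2 ∧ u = s ∧ w = t) l)
      (mY t) (hin u1 u2 s t) (pY t) ?_
    have k1 : pr Q (fun c => c.b = v ∧
          ((c.x1 = u1 ∧ c.x2 = u2 ∧ c.x3 = s ∧ c.y = t) ∧ c.lam = l))
        = pr Q (fun c => c.lam = l ∧ c.b = v ∧
            c.x1 = u1 ∧ c.x2 = u2 ∧ c.x3 = s ∧ c.y = t) := pr_ext Q fun c => by tauto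
    have k2 : pr Q (fun c => c.b = v ∧ ((c.y = t) ∧ c.lam = l))
        = pr Q (fun c => c.lam = l ∧ c.b = v ∧ c.y = t) := pr_ext Q fun c => by tauto
    rw [k1, k2]
    exact hRC1 l v u1 u2 s t
  -- conditional marginal stability of a3
  have ta3 : ∀ (v : Bool) (s t : Fin (N + 1)),
      cpr Q (fun c => c.a3 = v)
          (fun c => (c.x1 = false ∧ c.x2 = false ∧ c.x3 = s ∧ c.y = t) ∧ c.lam = l)
        = cpr Q (fun c => c.a3 = v)
            (fun c => (c.x1 = false ∧ c.x2 = false ∧ c.x3 = s) ∧ c.lam = l) := by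
    intro v s t
    refine cpr_transfer Q hq (m00 s t) (mX3 s) (hin false false s t) (pX3 s) ?_
    have k1 : pr Q (fun c => c.a3 = v ∧
          ((c.x1 = false ∧ c.x2 = false ∧ c.x3 = s ∧ c.y = t) ∧ c.lam = l))
        = ∑ p : Bool × Bool, pr Q (fun c => c.lam = l ∧ c.a1 = p.1 ∧ c.a2 = p.2
            ∧ c.a3 = v ∧ c.x1 = false ∧ c.x2 = false ∧ c.x3 = s ∧ c.y = t) := by
      rw [pr_split Q (fun c => (c.a1, c.a2))]
      exact Finset.sum_congr rfl fun p _ => pr_ext Q fun c => by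
        obtain ⟨p1, p2⟩ := p
        simp only [Prod.mk.injEq]; tauto
    have k2 : pr Q (fun c => c.a3 = v ∧
          ((c.x1 = false ∧ c.x2 = false ∧ c.x3 = s) ∧ c.lam = l))
        = ∑ p : Bool × Bool, pr Q (fun c => c.lam = l ∧ c.a1 = p.1 ∧ c.a2 = p.2
            ∧ c.a3 = v ∧ c.x1 = false ∧ c.x2 = false ∧ c.x3 = s) := by
      rw [pr_split Q (fun c => (c.a1, c.a2))]
      exact Finset.sum_congr rfl fun p _ => pr_ext Q fun c => by
        obtain ⟨p1, p2⟩ := p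
        simp only [Prod.mk.injEq]; tauto
    rw [k1, k2, Finset.sum_mul, Finset.sum_mul]
    exact Finset.sum_congr rfl fun p _ => hRC2 l p.1 p.2 v false false s t
  -- conditional marginal stability of a1
  have ta1 : ∀ (v : Bool) (t : Fin (N + 1)),
      cpr Q (fun c => c.a1 = v)
          (fun c => (c.x1 = true ∧ c.x2 = true ∧ c.x3 = 0 ∧ c.y = t) ∧ c.lam = l)
        = cpr Q (fun c => c.a1 = v) (fun c => (c.x1 = true ∧ c.x2 = true) ∧ c.lam = l) := by
    intro v t
    refine cpr_transfer Q hq (m11 t) mP11 (hin true true 0 t) pP11 ?_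
    have k1 : pr Q (fun c => c.a1 = v ∧
          ((c.x1 = true ∧ c.x2 = true ∧ c.x3 = 0 ∧ c.y = t) ∧ c.lam = l))
        = ∑ p : Bool, pr Q (fun c => c.lam = l ∧ c.a1 = v ∧ c.a2 = p
            ∧ c.x1 = true ∧ c.x2 = true ∧ c.x3 = 0 ∧ c.y = t) := by
      rw [pr_split Q (fun c => c.a2)]
      exact Finset.sum_congr rfl fun p _ => pr_ext Q fun c => by tauto
    have k2 : pr Q (fun c => c.a1 = v ∧ ((c.x1 = true ∧ c.x2 = true) ∧ c.lam = l))
        = ∑ p : Bool, pr Q (fun c => c.lam = l ∧ c.a1 = v ∧ c.a2 = p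
            ∧ c.x1 = true ∧ c.x2 = true) := by
      rw [pr_split Q (fun c => c.a2)]
      exact Finset.sum_congr rfl fun p _ => pr_ext Q fun c => by tauto
    rw [k1, k2, Finset.sum_mul, Finset.sum_mul]
    exact Finset.sum_congr rfl fun p _ => hRC3 l v p true true 0 t
  -- positivity of conditional input events
  have p00 : ∀ s t : Fin (N + 1), 0 < pr Q
      (fun c => (c.x1 = false ∧ c.x2 = false ∧ c.x3 = s ∧ c.y = t) ∧ c.lam = l) := by
    intro s t
    rw [m00 s t]
    exact mul_pos hq (hin false false s t)
  have p11 : ∀ t : Fin (N + 1), 0 < pr Q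
      (fun c => (c.x1 = true ∧ c.x2 = true ∧ c.x3 = 0 ∧ c.y = t) ∧ c.lam = l) := by
    intro t
    rw [m11 t]
    exact mul_pos hq (hin true true 0 t)
  have pYl : ∀ t : Fin (N + 1), 0 < pr Q (fun c => (c.y = t) ∧ c.lam = l) := by
    intro t
    rw [mY t]
    exact mul_pos hq (pY t)
  -- the error term
  set e : ℝ := cpr Q (fun c => c.a1 = !vstar)
    (fun c => (c.x1 = true ∧ c.x2 = true) ∧ c.lam = l) with hedef
  have he0 : 0 ≤ e := cpr_nonneg Q hnn _ _
  have healpha : e ≤ alphal Q l := halpha hq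
  -- complement facts
  have bcompl : ∀ t : Fin (N + 1),
      cpr Q (fun c => c.b = vstar) (fun c => (c.y = t) ∧ c.lam = l)
        = 1 - cpr Q (fun c => c.b = !vstar) (fun c => (c.y = t) ∧ c.lam = l) := by
    intro t
    have h1 := cpr_compl Q (pYl t) (fun c => c.b = vstar)
    have h2 : cpr Q (fun c => ¬ c.b = vstar) (fun c => (c.y = t) ∧ c.lam = l)
        = cpr Q (fun c => c.b = !vstar) (fun c => (c.y = t) ∧ c.lam = l) :=
      cpr_ext Q (fun c => by cases hb : c.b <;> cases vstar <;> simp)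
        (fun c => Iff.rfl)
    rw [h2] at h1
    linarith
  -- chain hypotheses
  have hcast : ∀ k : ℕ, 1 ≤ k → k ≤ N → ((k : ℕ) : Fin (N + 1)) ≠ 0 := by
    intro k h1 h2 h0
    rw [Fin.natCast_eq_zero] at h0
    have := Nat.le_of_dvd (by omega) h0
    omega
  have hR0 : ∀ t : Fin (N + 1), Rl Q l 0 t
      = cpr Q (fun c => c.a1 = c.b)
        (fun c => (c.x1 = true ∧ c.x2 = true ∧ c.x3 = 0 ∧ c.y = t) ∧ c.lam = l) := by
    intro t
    simp [Rl]
  have hRs : ∀ s t : Fin (N + 1), s ≠ 0 → Rl Q l s t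
      = cpr Q (fun c => c.a3 = c.b)
        (fun c => (c.x1 = false ∧ c.x2 = false ∧ c.x3 = s ∧ c.y = t) ∧ c.lam = l) := by
    intro s t hs
    simp [Rl, hs]
  -- h1 of the chain
  have ch1 : ∀ t : Fin (N + 1), Rl Q l 0 t
      ≤ (1 - cpr Q (fun c => c.b = !vstar) (fun c => (c.y = t) ∧ c.lam = l)) + e := by
    intro t
    rw [hR0 t]
    have step : cpr Q (fun c => c.a1 = c.b)
        (fun c => (c.x1 = true ∧ c.x2 = true ∧ c.x3 = 0 ∧ c.y = t) ∧ c.lam = l)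
        ≤ cpr Q (fun c => c.b = vstar)
            (fun c => (c.x1 = true ∧ c.x2 = true ∧ c.x3 = 0 ∧ c.y = t) ∧ c.lam = l)
          + cpr Q (fun c => c.a1 = !vstar)
            (fun c => (c.x1 = true ∧ c.x2 = true ∧ c.x3 = 0 ∧ c.y = t) ∧ c.lam = l) := by
      refine cpr_le_add Q hnn fun c hc => ?_
      by_cases hb : c.b = vstar
      · exact Or.inl hb
      · right
        rw [hc]
        revert hb
        cases c.b <;> cases vstar <;> simp
    rw [tb vstar true true 0 t, bcompl t, ta1 (!vstar) t] at step
    exact step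
  -- h2 of the chain
  have ch2 : ∀ t : Fin (N + 1),
      (1 - cpr Q (fun c => c.b = !vstar) (fun c => (c.y = t) ∧ c.lam = l)) - e
        ≤ Rl Q l 0 t := by
    intro t
    rw [hR0 t]
    have step : cpr Q (fun c => c.b = vstar)
        (fun c => (c.x1 = true ∧ c.x2 = true ∧ c.x3 = 0 ∧ c.y = t) ∧ c.lam = l)
        ≤ cpr Q (fun c => c.a1 = c.b)
            (fun c => (c.x1 = true ∧ c.x2 = true ∧ c.x3 = 0 ∧ c.y = t) ∧ c.lam = l)
          + cpr Q (fun c => c.a1 = !vstar)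
            (fun c => (c.x1 = true ∧ c.x2 = true ∧ c.x3 = 0 ∧ c.y = t) ∧ c.lam = l) := by
      refine cpr_le_add Q hnn fun c hc => ?_
      by_cases ha : c.a1 = c.b
      · exact Or.inl ha
      · right
        rw [hc] at ha
        revert ha
        cases c.a1 <;> cases vstar <;> simp
    rw [tb vstar true true 0 t, bcompl t, ta1 (!vstar) t] at step
    linarith
  -- h3 of the chain
  have ch3 : ∀ s t : Fin (N + 1), s ≠ 0 → Rl Q l s t
      = 1 - cpr Q (fun c => ¬ c.a3 = c.b)
          (fun c => (c.x1 = false ∧ c.x2 = false ∧ c.x3 = s ∧ c.y = t) ∧ c.lam = l) := by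
    intro s t hs
    rw [hRs s t hs]
    have := cpr_compl Q (p00 s t) (fun c => c.a3 = c.b)
    linarith
  -- h4 of the chain
  have ch4 : ∀ s t : Fin (N + 1),
      cpr Q (fun c => c.b = !vstar) (fun c => (c.y = t) ∧ c.lam = l)
        ≤ cpr Q (fun c => c.a3 = !vstar)
            (fun c => (c.x1 = false ∧ c.x2 = false ∧ c.x3 = s) ∧ c.lam = l)
          + cpr Q (fun c => ¬ c.a3 = c.b)
            (fun c => (c.x1 = false ∧ c.x2 = false ∧ c.x3 = s ∧ c.y = t) ∧ c.lam = l) := by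
    intro s t
    rw [← tb (!vstar) false false s t, ← ta3 (!vstar) s t]
    refine cpr_le_add Q hnn fun c hc => ?_
    by_cases ha : c.a3 = c.b
    · exact Or.inl (by rw [ha]; exact hc)
    · exact Or.inr ha
  -- h5 of the chain
  have ch5 : ∀ s t : Fin (N + 1),
      cpr Q (fun c => c.a3 = !vstar)
          (fun c => (c.x1 = false ∧ c.x2 = false ∧ c.x3 = s) ∧ c.lam = l)
        ≤ cpr Q (fun c => c.b = !vstar) (fun c => (c.y = t) ∧ c.lam = l)
          + cpr Q (fun c => ¬ c.a3 = c.b)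
            (fun c => (c.x1 = false ∧ c.x2 = false ∧ c.x3 = s ∧ c.y = t) ∧ c.lam = l) := by
    intro s t
    rw [← tb (!vstar) false false s t, ← ta3 (!vstar) s t]
    refine cpr_le_add Q hnn fun c hc => ?_
    by_cases ha : c.a3 = c.b
    · exact Or.inl (by rw [← ha]; exact hc)
    · exact Or.inr ha
  -- assemble the chain
  have hchain := chain_bound N hN (fun s t => Rl Q l (s : Fin (N + 1)) (t : Fin (N + 1)))
    (fun t => cpr Q (fun c => c.b = !vstar)
      (fun c => (c.y = ((t : ℕ) : Fin (N + 1))) ∧ c.lam = l))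
    (fun s => cpr Q (fun c => c.a3 = !vstar)
      (fun c => (c.x1 = false ∧ c.x2 = false ∧ c.x3 = ((s : ℕ) : Fin (N + 1))) ∧ c.lam = l))
    (fun s t => cpr Q (fun c => ¬ c.a3 = c.b)
      (fun c => (c.x1 = false ∧ c.x2 = false ∧ c.x3 = ((s : ℕ) : Fin (N + 1))
        ∧ c.y = ((t : ℕ) : Fin (N + 1))) ∧ c.lam = l))
    e
    (fun t _ => by
      have := ch1 ((t : ℕ) : Fin (N + 1))
      simp only [Nat.cast_zero]
      exact this)
    (fun t _ => by
      have := ch2 ((t : ℕ) : Fin (N + 1))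
      simp only [Nat.cast_zero]
      exact this)
    (fun s t hs1 hsN _ => ch3 _ _ (hcast s hs1 hsN))
    (fun s t _ _ _ => ch4 _ _)
    (fun s t _ _ _ => ch5 _ _)
  have hBCl : BCl Q l ≤ 2 * N + 2 * e := by
    unfold BCl
    simp only [Nat.cast_zero] at hchain
    exact hchain
  -- conclude
  have hal : 0 ≤ alphal Q l := alphal_nonneg Q hnn l
  have hN' : (1 : ℝ) ≤ (N : ℝ) := by exact_mod_cast hN
  have : BCl Q l ≤ 2 * N + 2 * N * alphal Q l := by nlinarith
  exact mul_le_mul_of_nonneg_left this hq.le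

end Main
/-- **Corollary in Appendix C.**  If the data reach the quantum value of
the causal Braunstein–Caves expression, then the fraction of runs with a definite causal
order is at most `(N+1)(1 − cos(π/(N+1)))`. -/
theorem stmt11 (N : ℕ) (hN : 1 ≤ N) (Q : CfgO N → ℝ)
    -- `Q` is a probability distribution
    (hnn : ∀ c, 0 ≤ Q c)
    (hsum : (∑ c : CfgO N, Q c) = 1)
    -- (i) all inputs have positive probability
    (hin : ∀ (x1v x2v : Bool) (x3v yv : Fin (N + 1)),
      0 < pr Q (fun c => c.x1 = x1v ∧ c.x2 = x2v ∧ c.x3 = x3v ∧ c.y = yv))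
    -- (ii) `λ ⫫ (x1, x2, x3, y)`
    (hfree : ∀ (lv : Option Bool) (x1v x2v : Bool) (x3v yv : Fin (N + 1)),
      pr Q (fun c => c.lam = lv ∧ c.x1 = x1v ∧ c.x2 = x2v ∧ c.x3 = x3v ∧ c.y = yv)
        = pr Q (fun c => c.lam = lv)
          * pr Q (fun c => c.x1 = x1v ∧ c.x2 = x2v ∧ c.x3 = x3v ∧ c.y = yv))
    -- (iii) `a1 ⫫ x2 | (x1, λ=0)` and `a2 ⫫ x1 | (x2, λ=1)`
    (hA0 : ∀ a1v x2v x1v : Bool,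
      pr Q (fun c => c.a1 = a1v ∧ c.x2 = x2v ∧ c.x1 = x1v ∧ c.lam = some false)
          * pr Q (fun c => c.x1 = x1v ∧ c.lam = some false)
        = pr Q (fun c => c.a1 = a1v ∧ c.x1 = x1v ∧ c.lam = some false)
          * pr Q (fun c => c.x2 = x2v ∧ c.x1 = x1v ∧ c.lam = some false))
    (hA1 : ∀ a2v x1v x2v : Bool,
      pr Q (fun c => c.a2 = a2v ∧ c.x1 = x1v ∧ c.x2 = x2v ∧ c.lam = some true)
          * pr Q (fun c => c.x2 = x2v ∧ c.lam = some true)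
        = pr Q (fun c => c.a2 = a2v ∧ c.x2 = x2v ∧ c.lam = some true)
          * pr Q (fun c => c.x1 = x1v ∧ c.x2 = x2v ∧ c.lam = some true))
    -- (iv) `(λ, b) ⫫ (x1, x2, x3) | y`
    (hRC1 : ∀ (lv : Option Bool) (bv x1v x2v : Bool) (x3v yv : Fin (N + 1)),
      pr Q (fun c => c.lam = lv ∧ c.b = bv ∧
            c.x1 = x1v ∧ c.x2 = x2v ∧ c.x3 = x3v ∧ c.y = yv)
          * pr Q (fun c => c.y = yv)
        = pr Q (fun c => c.lam = lv ∧ c.b = bv ∧ c.y = yv)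
          * pr Q (fun c => c.x1 = x1v ∧ c.x2 = x2v ∧ c.x3 = x3v ∧ c.y = yv))
    -- `(λ, a1, a2, a3) ⫫ y | (x1, x2, x3)`
    (hRC2 : ∀ (lv : Option Bool) (a1v a2v a3v x1v x2v : Bool) (x3v yv : Fin (N + 1)),
      pr Q (fun c => c.lam = lv ∧ c.a1 = a1v ∧ c.a2 = a2v ∧ c.a3 = a3v ∧
            c.x1 = x1v ∧ c.x2 = x2v ∧ c.x3 = x3v ∧ c.y = yv)
          * pr Q (fun c => c.x1 = x1v ∧ c.x2 = x2v ∧ c.x3 = x3v)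
        = pr Q (fun c => c.lam = lv ∧ c.a1 = a1v ∧ c.a2 = a2v ∧ c.a3 = a3v ∧
            c.x1 = x1v ∧ c.x2 = x2v ∧ c.x3 = x3v)
          * pr Q (fun c => c.x1 = x1v ∧ c.x2 = x2v ∧ c.x3 = x3v ∧ c.y = yv))
    -- `(λ, a1, a2) ⫫ (x3, y) | (x1, x2)`
    (hRC3 : ∀ (lv : Option Bool) (a1v a2v x1v x2v : Bool) (x3v yv : Fin (N + 1)),
      pr Q (fun c => c.lam = lv ∧ c.a1 = a1v ∧ c.a2 = a2v ∧
            c.x1 = x1v ∧ c.x2 = x2v ∧ c.x3 = x3v ∧ c.y = yv)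
          * pr Q (fun c => c.x1 = x1v ∧ c.x2 = x2v)
        = pr Q (fun c => c.lam = lv ∧ c.a1 = a1v ∧ c.a2 = a2v ∧
            c.x1 = x1v ∧ c.x2 = x2v)
          * pr Q (fun c => c.x1 = x1v ∧ c.x2 = x2v ∧ c.x3 = x3v ∧ c.y = yv))
    -- the data attain the quantum value of the causal Braunstein–Caves expression
    (hquantum : BC Q - 2 * (N : ℝ) * alphaQ Q
      = ((N : ℝ) + 1) * (Real.cos (Real.pi / ((N : ℝ) + 1)) + 1) - 1) :
    pr Q (fun c => c.lam ≠ none)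
      ≤ ((N : ℝ) + 1) * (1 - Real.cos (Real.pi / ((N : ℝ) + 1))) := by

  have hq0 : ∀ l : Option Bool, 0 ≤ pr Q (fun c => c.lam = l) :=
    fun l => pr_nonneg Q hnn _
  have hBC := BC_decomp Q hnn hin hfree
  have hal := alpha_decomp Q hnn hin hfree
  rw [sum_option3] at hBC hal
  have htot : pr Q (fun c => c.lam = none)
      + (pr Q (fun c => c.lam = some true) + pr Q (fun c => c.lam = some false)) = 1 := by
    have h1 : pr Q (fun _ : CfgO N => True) = 1 := by
      rw [← hsum]; unfold pr; simp
    have h2 := pr_split Q (fun c => c.lam) (fun _ : CfgO N => True)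
    rw [sum_option3] at h2
    have e : ∀ l : Option Bool,
        pr Q (fun c => True ∧ c.lam = l) = pr Q (fun c => c.lam = l) :=
      fun l => pr_ext Q fun c => by tauto
    rw [e, e, e] at h2
    linarith
  have hne : pr Q (fun c => c.lam ≠ none)
      = pr Q (fun c => c.lam = some true) + pr Q (fun c => c.lam = some false) := by
    have h2 := pr_split Q (fun c => c.lam) (fun c : CfgO N => c.lam ≠ none)
    rw [sum_option3] at h2
    have e0 : pr Q (fun c => c.lam ≠ none ∧ c.lam = none) = 0 := by
      rw [pr_ext Q (F := fun _ => False) (fun c => by tauto), pr_false]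
    have e1 : pr Q (fun c => c.lam ≠ none ∧ c.lam = some true)
        = pr Q (fun c => c.lam = some true) :=
      pr_ext Q fun c => ⟨fun h => h.2, fun h => ⟨by rw [h]; simp, h⟩⟩
    have e2 : pr Q (fun c => c.lam ≠ none ∧ c.lam = some false)
        = pr Q (fun c => c.lam = some false) :=
      pr_ext Q fun c => ⟨fun h => h.2, fun h => ⟨by rw [h]; simp, h⟩⟩
    rw [e0, e1, e2] at h2
    linarith
  have hb_sf := def_bound Q hN hnn hin hfree hRC1 hRC2 hRC3 (some false) false
    (fun hq => halpha_sf Q hnn hin hfree hA0 hq)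
  have hb_st := def_bound Q hN hnn hin hfree hRC1 hRC2 hRC3 (some true) true
    (fun hq => halpha_st Q hnn hin hfree hA1 hq)
  have hb_n1 : pr Q (fun c => c.lam = none) * BCl Q none
      ≤ pr Q (fun c => c.lam = none) * (2 * N + 1) :=
    mul_le_mul_of_nonneg_left (BCl_le Q hN hnn none) (hq0 none)
  have hb_n2 : 0 ≤ 2 * (N : ℝ) * (pr Q (fun c => c.lam = none) * alphal Q none) := by
    have := mul_nonneg (hq0 none) (alphal_nonneg Q hnn none)
    positivity
  have ef : pr Q (fun c => c.lam = some false)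
        * (2 * (N : ℝ) + 2 * N * alphal Q (some false))
      = 2 * N * pr Q (fun c => c.lam = some false)
        + 2 * N * (pr Q (fun c => c.lam = some false) * alphal Q (some false)) := by
    ring
  have et : pr Q (fun c => c.lam = some true)
        * (2 * (N : ℝ) + 2 * N * alphal Q (some true))
      = 2 * N * pr Q (fun c => c.lam = some true)
        + 2 * N * (pr Q (fun c => c.lam = some true) * alphal Q (some true)) := by
    ring
  have en : pr Q (fun c => c.lam = none) * (2 * (N : ℝ) + 1)
      = 2 * N * pr Q (fun c => c.lam = none) + pr Q (fun c => c.lam = none) := by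
    ring
  have hasf : 0 ≤ 2 * (N : ℝ) * (pr Q (fun c => c.lam = some false) * alphal Q (some false)) := by
    have := mul_nonneg (hq0 (some false)) (alphal_nonneg Q hnn (some false))
    positivity
  have hast : 0 ≤ 2 * (N : ℝ) * (pr Q (fun c => c.lam = some true) * alphal Q (some true)) := by
    have := mul_nonneg (hq0 (some true)) (alphal_nonneg Q hnn (some true))
    positivity
  have hz : 2 * (N : ℝ) * (pr Q (fun c => c.lam = none)
      + (pr Q (fun c => c.lam = some true) + pr Q (fun c => c.lam = some false))) = 2 * N := by
    rw [htot]; ring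
  have key : BC Q - 2 * (N : ℝ) * alphaQ Q
      ≤ 2 * N + 1 - (pr Q (fun c => c.lam = some true)
        + pr Q (fun c => c.lam = some false)) := by
    rw [hBC, hal]
    nlinarith [hb_sf, hb_st, hb_n1, hb_n2, ef, et, en, hasf, hast, hz]
  rw [hquantum] at key
  rw [hne]
  have hr : 2 * (N : ℝ) + 1
      - (((N : ℝ) + 1) * (Real.cos (Real.pi / ((N : ℝ) + 1)) + 1) - 1)
      = ((N : ℝ) + 1) * (1 - Real.cos (Real.pi / ((N : ℝ) + 1))) := by
    ring
  linarith
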